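/- The signed Petersen graph with all edges negative has frustration index exactly 3, which equals (3/10) times its number of vertices; equivalently, the maximum cut of the Petersen graph has size 12. -/

import Mathlib

open scoped Classical

/-- The Boolean indicating whether an edge crosses the vertex set `X`. -/
noncomputable def sgnCross {V : Type*} (X : Set V) : Sym2 V → Bool :=
  Sym2.lift ⟨fun a b => xor (decide (a ∈ X)) (decide (b ∈ X)),
    fun a b => Bool.xor_comm _ _⟩

/-- The signature obtained from `σ` by switching at the edge-cut `[X, Xᶜ]`:
the signs of all edges crossing `X` are flipped.  (`true` = negative.) -/
noncomputable def sgnSwitch {V : Type*} (σ : Sym2 V → Bool) (X : Set V) : Sym2 V → Bool :=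
  fun e => xor (σ e) (sgnCross X e)

/-- The number of negative edges of the signed graph `(G, σ)`. -/
noncomputable def negNum {V : Type*} (G : SimpleGraph V) (σ : Sym2 V → Bool) : ℕ :=
  {e | e ∈ G.edgeSet ∧ σ e = true}.ncard

/-- The frustration index of `(G, σ)`: the minimum number of negative edges over
all switching-equivalent signatures. -/
noncomputable def frust {V : Type*} (G : SimpleGraph V) (σ : Sym2 V → Bool) : ℕ :=
  ⨅ X : Set V, negNum G (sgnSwitch σ X)

/-- The number of edges of `G` in the edge-cut `[X, Xᶜ]`. -/
noncomputable def cutSize {V : Type*} (G : SimpleGraph V) (X : Set V) : ℕ :=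
  {e | e ∈ G.edgeSet ∧ sgnCross X e = true}.ncard

/-- A graph is 2-edge-connected if every edge-cut has at least 2 edges. -/
def TwoEdgeConn {V : Type*} (G : SimpleGraph V) : Prop :=
  ∀ X : Set V, X.Nonempty → Xᶜ.Nonempty → 2 ≤ cutSize G X

/-- The Petersen graph, as the Kneser graph `K(5,2)`. -/
def petersen : SimpleGraph {s : Finset (Fin 5) // s.card = 2} where
  Adj a b := Disjoint a.1 b.1
  symm := ⟨fun _ _ h => h.symm⟩
  loopless := by
    refine ⟨fun a h => ?_⟩
    change Disjoint a.1 a.1 at h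
    rw [disjoint_self] at h
    have h2 := a.2
    rw [h] at h2
    simp at h2

/-! ### Auxiliary computable machinery -/

abbrev Vp := {s : Finset (Fin 5) // s.card = 2}

instance : DecidableEq Vp := inferInstance

def crossB (f : Vp → Bool) : Sym2 Vp → Bool :=
  Sym2.lift ⟨fun a b => xor (f a) (f b), fun a b => Bool.xor_comm _ _⟩

def edgeB : Sym2 Vp → Bool :=
  Sym2.lift ⟨fun a b => decide (Disjoint a.1 b.1), fun a b => by
    simp [disjoint_comm]⟩

def cutB (f : Vp → Bool) : ℕ :=
  (Finset.univ.filter (fun e : Sym2 Vp => edgeB e = true ∧ crossB f e = true)).card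

def negB (f : Vp → Bool) : ℕ :=
  (Finset.univ.filter (fun e : Sym2 Vp => edgeB e = true ∧ crossB f e = false)).card

/-- Explicit enumeration of the vertices. -/
def vList : Fin 10 → Vp :=
  ![⟨{0,1}, by decide⟩, ⟨{0,2}, by decide⟩, ⟨{0,3}, by decide⟩, ⟨{0,4}, by decide⟩,
    ⟨{1,2}, by decide⟩, ⟨{1,3}, by decide⟩, ⟨{1,4}, by decide⟩, ⟨{2,3}, by decide⟩,
    ⟨{2,4}, by decide⟩, ⟨{3,4}, by decide⟩]

def vIdx (v : Vp) : Fin 10 :=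
  if v.1 = {0,1} then 0 else if v.1 = {0,2} then 1 else if v.1 = {0,3} then 2
  else if v.1 = {0,4} then 3 else if v.1 = {1,2} then 4 else if v.1 = {1,3} then 5
  else if v.1 = {1,4} then 6 else if v.1 = {2,3} then 7 else if v.1 = {2,4} then 8
  else 9

def eV : Fin 10 ≃ Vp where
  toFun := vList
  invFun := vIdx
  left_inv := by decide
  right_inv := by decide

def edgeL : List (ℕ × ℕ) :=
  [(0,7),(0,8),(0,9),(1,5),(1,6),(1,9),(2,4),(2,6),(2,8),(3,4),(3,5),(3,7),(4,9),(5,8),(6,7)]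

def adjF (i j : Fin 10) : Bool :=
  decide ((i.val, j.val) ∈ edgeL) || decide ((j.val, i.val) ∈ edgeL)

def edgeF : Sym2 (Fin 10) → Bool := Sym2.lift ⟨adjF, by decide⟩

def crossF (x : Fin 10 → Bool) : Sym2 (Fin 10) → Bool :=
  Sym2.lift ⟨fun i j => xor (x i) (x j), fun i j => Bool.xor_comm _ _⟩

def cutF (x : Fin 10 → Bool) : ℕ :=
  (Finset.univ.filter (fun p : Sym2 (Fin 10) => edgeF p = true ∧ crossF x p = true)).card

set_option maxHeartbeats 4000000 in
set_option maxRecDepth 10000 in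
theorem key : ∀ a b c d e f g h i j : Bool, cutF ![a,b,c,d,e,f,g,h,i,j] ≤ 12 := by decide

theorem cutF_le (x : Fin 10 → Bool) : cutF x ≤ 12 := by
  have := key (x 0) (x 1) (x 2) (x 3) (x 4) (x 5) (x 6) (x 7) (x 8) (x 9)
  have hx : ![x 0, x 1, x 2, x 3, x 4, x 5, x 6, x 7, x 8, x 9] = x := by
    funext i; fin_cases i <;> rfl
  rwa [hx] at this

theorem edgeB_map : ∀ p : Sym2 (Fin 10), edgeB (Sym2.map eV p) = edgeF p := by decide

theorem crossB_map (f : Vp → Bool) (p : Sym2 (Fin 10)) :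
    crossB f (Sym2.map eV p) = crossF (fun i => f (eV i)) p := by
  induction p using Sym2.ind with
  | _ i j => simp [crossB, crossF, Sym2.map_pair_eq]

theorem map_eV_symm (e : Sym2 Vp) : Sym2.map eV (Sym2.map eV.symm e) = e := by
  induction e using Sym2.ind with
  | _ a b => simp [Sym2.map_pair_eq]

theorem map_symm_eV (p : Sym2 (Fin 10)) : Sym2.map eV.symm (Sym2.map eV p) = p := by
  induction p using Sym2.ind with
  | _ a b => simp [Sym2.map_pair_eq]

theorem cutB_eq_cutF (f : Vp → Bool) : cutB f = cutF (fun i => f (eV i)) := by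
  unfold cutB cutF
  refine (Finset.card_nbij'
    (s := Finset.univ.filter (fun p : Sym2 (Fin 10) =>
      edgeF p = true ∧ crossF (fun i => f (eV i)) p = true))
    (t := Finset.univ.filter (fun e : Sym2 Vp => edgeB e = true ∧ crossB f e = true))
    (fun p => Sym2.map eV p) (fun e => Sym2.map eV.symm e)
    ?_ ?_ ?_ ?_).symm
  · intro p hp
    simp only [Finset.mem_coe, Finset.mem_filter, Finset.mem_univ, true_and] at hp ⊢
    rw [edgeB_map, crossB_map]
    exact hp
  · intro e he
    simp only [Finset.mem_coe, Finset.mem_filter, Finset.mem_univ, true_and] at he ⊢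
    rw [← map_eV_symm e, edgeB_map, crossB_map] at he
    exact he
  · intro p _
    exact map_symm_eV p
  · intro e _
    exact map_eV_symm e

theorem cutB_le (f : Vp → Bool) : cutB f ≤ 12 := by
  rw [cutB_eq_cutF]; exact cutF_le _

theorem edge_card : (Finset.univ.filter (fun e : Sym2 Vp => edgeB e = true)).card = 15 := by
  decide

theorem cutB_add_negB (f : Vp → Bool) : cutB f + negB f = 15 := by
  rw [← edge_card]
  unfold cutB negB
  have := Finset.card_filter_add_card_filter_not
    (s := Finset.univ.filter (fun e : Sym2 Vp => edgeB e = true))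
    (p := fun e => crossB f e = true)
  simp only [Finset.filter_filter, Bool.not_eq_true] at this
  exact this

theorem negB_ge (f : Vp → Bool) : 3 ≤ negB f := by
  have h1 := cutB_add_negB f
  have h2 := cutB_le f
  omega

/-! ### Bridges between set-based and Finset-based definitions -/

theorem mem_edgeSet_iff (e : Sym2 Vp) : e ∈ petersen.edgeSet ↔ edgeB e = true := by
  induction e using Sym2.ind with
  | _ a b =>
    rw [SimpleGraph.mem_edgeSet]
    simp [petersen, edgeB]

theorem sgnCross_eq (X : Set Vp) (e : Sym2 Vp) :
    sgnCross X e = crossB (fun v => decide (v ∈ X)) e := by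
  induction e using Sym2.ind with
  | _ a b => simp [sgnCross, crossB]

theorem cutSize_eq (X : Set Vp) : cutSize petersen X = cutB (fun v => decide (v ∈ X)) := by
  unfold cutSize cutB
  rw [show {e | e ∈ petersen.edgeSet ∧ sgnCross X e = true}
      = ↑(Finset.univ.filter (fun e : Sym2 Vp =>
          edgeB e = true ∧ crossB (fun v => decide (v ∈ X)) e = true)) by
    ext e
    simp only [Set.mem_setOf_eq, Finset.coe_filter, Finset.mem_univ, true_and,
      mem_edgeSet_iff, sgnCross_eq]]
  rw [Set.ncard_coe_finset]

theorem negNum_eq (X : Set Vp) :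
    negNum petersen (sgnSwitch (fun _ => true) X) = negB (fun v => decide (v ∈ X)) := by
  unfold negNum negB
  rw [show {e | e ∈ petersen.edgeSet ∧ sgnSwitch (fun _ => true) X e = true}
      = ↑(Finset.univ.filter (fun e : Sym2 Vp =>
          edgeB e = true ∧ crossB (fun v => decide (v ∈ X)) e = false)) by
    ext e
    simp only [Set.mem_setOf_eq, Finset.coe_filter, Finset.mem_univ, true_and,
      mem_edgeSet_iff, sgnSwitch, Bool.true_xor, Bool.not_eq_true', sgnCross_eq]]
  rw [Set.ncard_coe_finset]

/-- A maximum cut: vertices (2-subsets) containing `0`. -/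
def X₀ : Set Vp := {v : Vp | (0 : Fin 5) ∈ v.1}

def f₀ : Vp → Bool := fun v => decide ((0 : Fin 5) ∈ v.1)

theorem f₀_eq : (fun v => decide (v ∈ X₀)) = f₀ := by
  funext v
  exact decide_eq_decide.mpr Iff.rfl

theorem cutB_f₀ : cutB f₀ = 12 := by decide

theorem negB_f₀ : negB f₀ = 3 := by
  have := cutB_add_negB f₀
  rw [cutB_f₀] at this
  omega

theorem card_Vp : Fintype.card Vp = 10 := by decide

/-- The all-negative signed Petersen graph has frustration index
exactly `3 = (3/10)·v`; equivalently, the maximum cut of the Petersen graph has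
size `12 = 15 − 3`. -/
theorem petersen_all_negative_frust :
    frust petersen (fun _ => true) = 3 ∧
    10 * frust petersen (fun _ => true) =
      3 * Fintype.card {s : Finset (Fin 5) // s.card = 2} ∧
    (∃ X : Set {s : Finset (Fin 5) // s.card = 2}, cutSize petersen X = 12) ∧
    (∀ X : Set {s : Finset (Fin 5) // s.card = 2}, cutSize petersen X ≤ 12) := by
  have hfrust : frust petersen (fun _ => true) = 3 := by
    apply le_antisymm
    · calc frust petersen (fun _ => true) ≤ negNum petersen (sgnSwitch (fun _ => true) X₀) :=
            ciInf_le (OrderBot.bddBelow _) X₀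
        _ = 3 := by rw [negNum_eq, f₀_eq, negB_f₀]
    · apply le_ciInf
      intro X
      rw [negNum_eq]
      exact negB_ge _
  refine ⟨hfrust, ?_, ?_, ?_⟩
  · rw [hfrust, card_Vp]
  · exact ⟨X₀, by rw [cutSize_eq, f₀_eq, cutB_f₀]⟩
  · intro X
    rw [cutSize_eq]
    exact cutB_le _
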